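/- For the radial function u_{σ,θ,d}(x) = u_{σ,θ}(|x|₂), the p-Laplacian vector field satisfies A(∇u_{σ,θ,d})(x) = |∇u_{σ,θ,d}(x)|₂^{p−2} ∇u_{σ,θ,d}(x) = v_{(p−1)σ,θ}(|x|₂) · x/|x|₂ = ∇u_{(p−1)σ,θ,d}(x) for all x ∈ ℝ^d. -/

import Mathlib

open MeasureTheory Real Set

noncomputable def zetaR (θ : ℝ) : ℝ := ∑' n : ℕ, ((n : ℝ) + 1) ^ (-θ)

noncomputable def aSeq (θ : ℝ) (n : ℕ) : ℝ :=
  4 * ∑ j ∈ Finset.Icc 1 (n - 1), (j : ℝ) ^ (-θ)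

noncomputable def wPiece (σ θ : ℝ) (n : ℕ) (ξ : ℝ) : ℝ :=
  if ξ < aSeq θ n + (n : ℝ) ^ (-θ) then (ξ - aSeq θ n) ^ σ
  else if ξ < aSeq θ n + 2 * (n : ℝ) ^ (-θ) then (n : ℝ) ^ (-(θ * σ))
  else if ξ < aSeq θ n + 3 * (n : ℝ) ^ (-θ) then (aSeq θ n + 3 * (n : ℝ) ^ (-θ) - ξ) ^ σ
  else 0

open Classical in
noncomputable def wFn (σ θ : ℝ) (ξ : ℝ) : ℝ :=
  if h : ∃ n : ℕ, 2 ≤ n ∧ aSeq θ n ≤ ξ ∧ ξ < aSeq θ (n + 1) then wPiece σ θ h.choose ξ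
  else 0
noncomputable def vFn (σ θ : ℝ) (r : ℝ) : ℝ :=
  wFn σ θ (16 * zetaR θ * r - 4 * zetaR θ) - wFn σ θ (16 * zetaR θ * r - 8 * zetaR θ)

noncomputable def uFn (σ θ : ℝ) (r : ℝ) : ℝ := ∫ ξ in (0 : ℝ)..r, vFn σ θ ξ


section Aux

variable {θ : ℝ}

lemma summable_aux (hθ : 1 < θ) : Summable (fun n : ℕ => ((n : ℝ) + 1) ^ (-θ)) := by
  have h : Summable (fun n : ℕ => ((n : ℝ)) ^ (-θ)) :=
    Real.summable_nat_rpow.2 (by linarith)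
  have := (summable_nat_add_iff 1).2 h
  simpa using this

lemma zetaR_pos (hθ : 1 < θ) : 0 < zetaR θ := by
  refine Summable.tsum_pos (summable_aux hθ) (fun i => Real.rpow_nonneg (by positivity) _) 0 ?_
  simpa using Real.rpow_pos_of_pos one_pos (-θ)

lemma aSeq_succ (hθ : 1 < θ) (n : ℕ) : aSeq θ (n + 1) = aSeq θ n + 4 * (n : ℝ) ^ (-θ) := by
  cases n with
  | zero => simp [aSeq, Real.zero_rpow (by intro h; simp at h; linarith : -θ ≠ 0)]
  | succ m =>
    simp only [aSeq, Nat.add_sub_cancel]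
    rw [Finset.sum_Icc_succ_top (by omega : 1 ≤ m + 1)]
    ring

lemma aSeq_mono (hθ : 1 < θ) : Monotone (aSeq θ) := by
  apply monotone_nat_of_le_succ
  intro n
  rw [aSeq_succ hθ]
  have : (0:ℝ) ≤ (n : ℝ) ^ (-θ) := Real.rpow_nonneg (by positivity) _
  linarith

lemma aSeq_lt_succ (hθ : 1 < θ) {n : ℕ} (hn : 1 ≤ n) : aSeq θ n < aSeq θ (n + 1) := by
  rw [aSeq_succ hθ]
  have : (0:ℝ) < (n : ℝ) ^ (-θ) := Real.rpow_pos_of_pos (by exact_mod_cast hn) _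
  linarith

lemma aSeq_two : aSeq θ 2 = 4 := by simp [aSeq]

lemma aSeq_eq_range (n : ℕ) : aSeq θ n = 4 * ∑ i ∈ Finset.range (n - 1), ((i : ℝ) + 1) ^ (-θ) := by
  rw [aSeq, ← Finset.Ico_add_one_right_eq_Icc, Finset.sum_Ico_eq_sum_range]
  congr 1
  refine Finset.sum_congr rfl fun i _ => ?_
  push_cast; ring_nf

lemma aSeq_le (hθ : 1 < θ) (n : ℕ) : aSeq θ n ≤ 4 * zetaR θ := by
  rw [aSeq_eq_range]
  have := Summable.sum_le_tsum (Finset.range (n-1))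
    (fun i _ => Real.rpow_nonneg (by positivity : (0:ℝ) ≤ (i:ℝ)+1) _) (summable_aux hθ)
  have h4 : (0:ℝ) ≤ 4 := by norm_num
  exact mul_le_mul_of_nonneg_left this h4

lemma aSeq_tendsto (hθ : 1 < θ) :
    Filter.Tendsto (fun n => aSeq θ (n + 1)) Filter.atTop (nhds (4 * zetaR θ)) := by
  have h := (summable_aux hθ).hasSum.tendsto_sum_nat
  have h2 := h.const_mul (4:ℝ)
  simp only [aSeq_eq_range, Nat.add_sub_cancel]
  exact h2

variable {σ ξ : ℝ}

lemma exists_interval (hθ : 1 < θ) (h4 : 4 ≤ ξ) (hS : ξ < 4 * zetaR θ) :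
    ∃ m : ℕ, 1 ≤ m ∧ aSeq θ (m + 1) ≤ ξ ∧ ξ < aSeq θ (m + 2) := by
  have hex : ∃ k, ξ < aSeq θ (k + 1) :=
    ((aSeq_tendsto hθ).eventually (lt_mem_nhds hS)).exists
  classical
  let k := Nat.find hex
  have hk : ξ < aSeq θ (k + 1) := Nat.find_spec hex
  have hk2 : 2 ≤ k := by
    by_contra hlt
    push_neg at hlt
    have : aSeq θ (k + 1) ≤ aSeq θ 2 := aSeq_mono hθ (by omega)
    rw [aSeq_two] at this
    linarith
  obtain ⟨m, hm⟩ : ∃ m, k = m + 1 := ⟨k - 1, by omega⟩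
  rw [hm] at hk
  refine ⟨m, by omega, ?_, hk⟩
  by_contra hlt
  push_neg at hlt
  exact Nat.find_min hex (by omega : m < k) hlt

lemma wFn_eq (hθ : 1 < θ) {n : ℕ} (hn : 2 ≤ n) (h1 : aSeq θ n ≤ ξ) (h2 : ξ < aSeq θ (n + 1)) :
    wFn σ θ ξ = wPiece σ θ n ξ := by
  have hex : ∃ n : ℕ, 2 ≤ n ∧ aSeq θ n ≤ ξ ∧ ξ < aSeq θ (n + 1) := ⟨n, hn, h1, h2⟩
  rw [wFn, dif_pos hex]
  obtain ⟨hm2, hm1, hm3⟩ := hex.choose_spec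
  congr 1
  set m := hex.choose with hmdef
  rcases lt_trichotomy m n with h | h | h
  · exfalso
    have : aSeq θ (m + 1) ≤ aSeq θ n := aSeq_mono hθ (by omega)
    linarith
  · exact h
  · exfalso
    have : aSeq θ (n + 1) ≤ aSeq θ m := aSeq_mono hθ (by omega)
    linarith

lemma wFn_zero (hθ : 1 < θ) (h : ξ < 4 ∨ 4 * zetaR θ ≤ ξ) : wFn σ θ ξ = 0 := by
  rw [wFn, dif_neg]
  rintro ⟨n, hn, h1, h2⟩
  rcases h with h | h
  · have : aSeq θ 2 ≤ aSeq θ n := aSeq_mono hθ hn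
    rw [aSeq_two] at this
    linarith
  · have := aSeq_le hθ (n + 1)
    linarith

lemma rpow_theta_sigma (n : ℕ) : (n : ℝ) ^ (-(θ * σ)) = ((n : ℝ) ^ (-θ)) ^ σ := by
  rw [show -(θ * σ) = (-θ) * σ by ring, Real.rpow_mul (by positivity : (0:ℝ) ≤ (n:ℝ))]

lemma wPiece_nonneg (hσ : 0 < σ) {n : ℕ} (h1 : aSeq θ n ≤ ξ) : 0 ≤ wPiece σ θ n ξ := by
  rw [wPiece]
  split_ifs with c1 c2 c3
  · exact Real.rpow_nonneg (by linarith) _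
  · exact Real.rpow_nonneg (by positivity) _
  · exact Real.rpow_nonneg (by linarith) _
  · exact le_refl 0

lemma wFn_nonneg (hσ : 0 < σ) (hθ : 1 < θ) : 0 ≤ wFn σ θ ξ := by
  rw [wFn]
  split_ifs with h
  · exact wPiece_nonneg hσ h.choose_spec.2.1
  · exact le_refl 0

lemma wPiece_le (hσ : 0 < σ) {n : ℕ} (h1 : aSeq θ n ≤ ξ) :
    wPiece σ θ n ξ ≤ (n : ℝ) ^ (-(θ * σ)) := by
  have ht : (0:ℝ) ≤ (n : ℝ) ^ (-θ) := Real.rpow_nonneg (by positivity) _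
  rw [wPiece, rpow_theta_sigma]
  split_ifs with c1 c2 c3
  · exact Real.rpow_le_rpow (by linarith) (by linarith) hσ.le
  · exact le_refl _
  · exact Real.rpow_le_rpow (by linarith) (by push_neg at c2; linarith) hσ.le
  · exact Real.rpow_nonneg ht _

lemma wFn_rpow (hσ : 0 < σ) {q : ℝ} (hq : 0 < q) (ξ : ℝ) :
    wFn (q * σ) θ ξ = (wFn σ θ ξ) ^ q := by
  rw [wFn, wFn]
  split_ifs with h
  · obtain ⟨hn2, h1, h2⟩ := h.choose_spec
    set n := h.choose
    rw [wPiece, wPiece]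
    split_ifs with c1 c2 c3
    · rw [mul_comm q σ, Real.rpow_mul (by linarith : (0:ℝ) ≤ ξ - aSeq θ n)]
    · rw [← Real.rpow_mul (by positivity : (0:ℝ) ≤ (n:ℝ))]
      ring_nf
    · rw [mul_comm q σ, Real.rpow_mul (by linarith : (0:ℝ) ≤ aSeq θ n + 3 * (n:ℝ) ^ (-θ) - ξ)]
    · rw [Real.zero_rpow hq.ne']
  · rw [Real.zero_rpow hq.ne']

noncomputable def bump (σ θ : ℝ) (n : ℕ) (ξ : ℝ) : ℝ :=
  min (min ((max (ξ - aSeq θ n) 0) ^ σ) ((n : ℝ) ^ (-(θ * σ))))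
    ((max (aSeq θ n + 3 * (n : ℝ) ^ (-θ) - ξ) 0) ^ σ)

lemma continuous_rpow_const (hσ : 0 < σ) : Continuous (fun t : ℝ => t ^ σ) :=
  continuous_iff_continuousAt.2 fun t => Real.continuousAt_rpow_const t σ (Or.inr hσ.le)

lemma bump_continuous (hσ : 0 < σ) (n : ℕ) : Continuous (bump σ θ n) := by
  apply Continuous.min
  · apply Continuous.min
    · exact (continuous_rpow_const hσ).comp ((continuous_id.sub continuous_const).max continuous_const)
    · exact continuous_const
  · exact (continuous_rpow_const hσ).comp ((continuous_const.sub continuous_id).max continuous_const)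

lemma bump_nonneg (n : ℕ) : 0 ≤ bump σ θ n ξ := by
  refine le_min (le_min ?_ ?_) ?_
  · exact Real.rpow_nonneg (le_max_right _ _) _
  · exact Real.rpow_nonneg (by positivity) _
  · exact Real.rpow_nonneg (le_max_right _ _) _

lemma bump_zero_left (hσ : 0 < σ) {n : ℕ} (h : ξ ≤ aSeq θ n) : bump σ θ n ξ = 0 := by
  rw [bump, max_eq_right (by linarith : ξ - aSeq θ n ≤ 0), Real.zero_rpow hσ.ne']
  rw [min_eq_left (Real.rpow_nonneg (by positivity) _),
    min_eq_left (Real.rpow_nonneg (le_max_right _ _) _)]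

lemma bump_zero_right (hσ : 0 < σ) {n : ℕ} (h : aSeq θ n + 3 * (n : ℝ) ^ (-θ) ≤ ξ) :
    bump σ θ n ξ = 0 := by
  rw [bump, max_eq_right (by linarith : aSeq θ n + 3 * (n:ℝ) ^ (-θ) - ξ ≤ 0),
    Real.zero_rpow hσ.ne']
  exact min_eq_right (le_min (Real.rpow_nonneg (le_max_right _ _) _)
    (Real.rpow_nonneg (by positivity) _))

lemma wPiece_eq_bump (hσ : 0 < σ) (hθ : 1 < θ) {n : ℕ} (hn : 2 ≤ n) (h1 : aSeq θ n ≤ ξ)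
    (h2 : ξ < aSeq θ (n + 1)) : wPiece σ θ n ξ = bump σ θ n ξ := by
  have htpos : (0:ℝ) < (n : ℝ) ^ (-θ) :=
    Real.rpow_pos_of_pos (by exact_mod_cast (by omega : 0 < n)) _
  set a := aSeq θ n
  set t := (n : ℝ) ^ (-θ)
  have h2' : ξ < a + 4 * t := by
    rw [aSeq_succ hθ] at h2; linarith
  have hts : (n : ℝ) ^ (-(θ * σ)) = t ^ σ := rpow_theta_sigma n
  rw [wPiece, bump, hts]
  split_ifs with c1 c2 c3
  · -- first branch
    rw [max_eq_left (by linarith : (0:ℝ) ≤ ξ - a)]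
    rw [min_eq_left (Real.rpow_le_rpow (by linarith) (by linarith) hσ.le)]
    rw [min_eq_left]
    rw [max_eq_left (by linarith : (0:ℝ) ≤ a + 3 * t - ξ)]
    exact Real.rpow_le_rpow (by linarith) (by linarith) hσ.le
  · rw [max_eq_left (by linarith : (0:ℝ) ≤ ξ - a)]
    rw [min_eq_right (Real.rpow_le_rpow htpos.le (by push_neg at c1; linarith) hσ.le)]
    rw [max_eq_left (by linarith : (0:ℝ) ≤ a + 3 * t - ξ)]
    exact (min_eq_left (Real.rpow_le_rpow htpos.le (by linarith) hσ.le)).symm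
  · push_neg at c1 c2
    rw [max_eq_left (by linarith : (0:ℝ) ≤ ξ - a)]
    rw [max_eq_left (by linarith : (0:ℝ) ≤ a + 3 * t - ξ)]
    rw [min_eq_right (Real.rpow_le_rpow htpos.le (by linarith) hσ.le)]
    exact (min_eq_right (Real.rpow_le_rpow (by linarith) (by linarith) hσ.le)).symm
  · push_neg at c3
    rw [max_eq_right (by linarith : a + 3 * t - ξ ≤ 0), Real.zero_rpow hσ.ne']
    exact (min_eq_right (le_min (Real.rpow_nonneg (le_max_right _ _) _)
      (Real.rpow_nonneg htpos.le _))).symm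

lemma wFn_eqOn_bump (hσ : 0 < σ) (hθ : 1 < θ) {n : ℕ} (hn : 1 ≤ n)
    (h1 : aSeq θ n + 3 * (n : ℝ) ^ (-θ) < ξ) (h2 : ξ < aSeq θ (n + 2)) :
    wFn σ θ ξ = bump σ θ (n + 1) ξ := by
  have htpos : (0:ℝ) < (n : ℝ) ^ (-θ) :=
    Real.rpow_pos_of_pos (by exact_mod_cast hn) _
  rcases lt_or_ge ξ (aSeq θ (n + 1)) with hlt | hge
  · rw [bump_zero_left hσ hlt.le]
    rcases Nat.lt_or_ge n 2 with hn2 | hn2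
    · interval_cases n
      · refine wFn_zero hθ (Or.inl ?_)
        rw [show (1:ℕ) + 1 = 2 from rfl, aSeq_two] at hlt
        exact hlt
    · have hup : aSeq θ n ≤ ξ := by
        have := aSeq_succ hθ n
        nlinarith [htpos]
      rw [wFn_eq hθ hn2 hup hlt, wPiece]
      rw [if_neg (by push_neg; nlinarith [htpos]), if_neg (by push_neg; nlinarith [htpos]),
        if_neg (by push_neg; nlinarith [htpos])]
  · rw [wFn_eq hθ (by omega) hge h2]
    exact wPiece_eq_bump hσ hθ (by omega) hge h2

lemma wFn_continuous (hσ : 0 < σ) (hθ : 1 < θ) : Continuous (wFn σ θ) := by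
  rw [continuous_iff_continuousAt]
  intro ξ
  rcases lt_trichotomy ξ (4 * zetaR θ) with hS | hS | hS
  · rcases lt_or_ge ξ 4 with h4 | h4
    · -- locally zero
      have : wFn σ θ =ᶠ[nhds ξ] (fun _ => (0:ℝ)) := by
        filter_upwards [Iio_mem_nhds h4] with t ht
        exact wFn_zero hθ (Or.inl ht)
      exact continuousAt_const.congr this.symm
    · obtain ⟨m, hm1, hm2, hm3⟩ := exists_interval hθ h4 hS
      have htpos : (0:ℝ) < (m : ℝ) ^ (-θ) :=
        Real.rpow_pos_of_pos (by exact_mod_cast hm1) _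
      have hlow : aSeq θ m + 3 * (m : ℝ) ^ (-θ) < ξ := by
        have := aSeq_succ hθ m
        nlinarith
      have hopen : Ioo (aSeq θ m + 3 * (m:ℝ) ^ (-θ)) (aSeq θ (m + 2)) ∈ nhds ξ :=
        Ioo_mem_nhds hlow hm3
      have heq : wFn σ θ =ᶠ[nhds ξ] bump σ θ (m + 1) := by
        filter_upwards [hopen] with t ht
        exact wFn_eqOn_bump hσ hθ hm1 ht.1 ht.2
      exact ((bump_continuous hσ (m + 1)).continuousAt).congr heq.symm
  · -- ξ = 4 * zetaR θ
    rw [Metric.continuousAt_iff]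
    intro ε hε
    have hw0 : wFn σ θ ξ = 0 := wFn_zero hθ (Or.inr hS.ge)
    -- find N with (N:ℝ) ^ (-(θ*σ)) < ε
    have htend : Filter.Tendsto (fun n : ℕ => ((n:ℝ)) ^ (-(θ * σ))) Filter.atTop (nhds 0) := by
      have : Filter.Tendsto (fun x : ℝ => x ^ (-(θ * σ))) Filter.atTop (nhds 0) :=
        tendsto_rpow_neg_atTop (by positivity)
      exact this.comp tendsto_natCast_atTop_atTop
    obtain ⟨N, hN⟩ := ((htend.eventually (gt_mem_nhds hε)).and
      (Filter.eventually_ge_atTop 2)).exists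
    obtain ⟨hNε, hN2⟩ := hN
    have hstrict : aSeq θ (N + 1) < 4 * zetaR θ :=
      lt_of_lt_of_le (aSeq_lt_succ hθ (by omega)) (aSeq_le hθ (N + 2))
    refine ⟨4 * zetaR θ - aSeq θ (N + 1), by linarith, ?_⟩
    intro ζ' hζ'
    rw [Real.dist_eq] at hζ' ⊢
    rw [hw0, sub_zero]
    rcases le_or_gt (4 * zetaR θ) ζ' with hge | hlt
    · rw [wFn_zero hθ (Or.inr hge), abs_zero]; exact hε
    · have hgt : aSeq θ (N + 1) < ζ' := by
        rw [abs_lt, hS] at hζ'; linarith [hζ'.1]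
      have h4' : (4:ℝ) ≤ ζ' := by
        have : aSeq θ 2 ≤ aSeq θ (N + 1) := aSeq_mono hθ (by omega)
        rw [aSeq_two] at this; linarith
      obtain ⟨m, hm1, hm2, hm3⟩ := exists_interval hθ h4' hlt
      have hmN : N ≤ m + 1 := by
        by_contra hc
        push_neg at hc
        have : aSeq θ (m + 2) ≤ aSeq θ (N + 1) := aSeq_mono hθ (by omega)
        linarith
      rw [wFn_eq hθ (by omega) hm2 hm3]
      have hb := wPiece_le (σ := σ) hσ hm2
      have hnn := wPiece_nonneg (σ := σ) hσ (ξ := ζ') (n := m + 1) hm2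
      rw [abs_of_nonneg hnn]
      calc wPiece σ θ (m+1) ζ' ≤ ((m+1 : ℕ) : ℝ) ^ (-(θ * σ)) := hb
        _ ≤ (N : ℝ) ^ (-(θ * σ)) := by
            rw [Real.rpow_neg (by positivity), Real.rpow_neg (by positivity)]
            apply inv_anti₀
            · apply Real.rpow_pos_of_pos; exact_mod_cast (by omega : 0 < N)
            · apply Real.rpow_le_rpow (by positivity) ?_ (by positivity)
              exact_mod_cast hmN
        _ < ε := hNε
  · -- locally zero beyond
    have : wFn σ θ =ᶠ[nhds ξ] (fun _ => (0:ℝ)) := by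
      filter_upwards [Ioi_mem_nhds hS] with t ht
      exact wFn_zero hθ (Or.inr (le_of_lt ht))
    exact continuousAt_const.congr this.symm

lemma vFn_continuous (hσ : 0 < σ) (hθ : 1 < θ) : Continuous (vFn σ θ) := by
  apply Continuous.sub
  · exact (wFn_continuous hσ hθ).comp (by continuity)
  · exact (wFn_continuous hσ hθ).comp (by continuity)

lemma hasDerivAt_uFn (hσ : 0 < σ) (hθ : 1 < θ) (r : ℝ) :
    HasDerivAt (uFn σ θ) (vFn σ θ r) r :=
  ((vFn_continuous hσ hθ).integral_hasStrictDerivAt 0 r).hasDerivAt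

lemma vFn_zero_small (hσ : 0 < σ) (hθ : 1 < θ) {r : ℝ} (h : r ≤ 1/4) : vFn σ θ r = 0 := by
  have hz := zetaR_pos hθ
  have hA : 16 * zetaR θ * r - 4 * zetaR θ ≤ 0 := by nlinarith
  have hB : 16 * zetaR θ * r - 8 * zetaR θ ≤ 0 := by nlinarith
  rw [vFn, wFn_zero hθ (Or.inl (by linarith)), wFn_zero hθ (Or.inl (by linarith)), sub_zero]

lemma uFn_zero_small (hσ : 0 < σ) (hθ : 1 < θ) {r : ℝ} (h0 : 0 ≤ r) (h : r < 1/4) :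
    uFn σ θ r = 0 := by
  rw [uFn]
  rw [intervalIntegral.integral_congr (g := fun _ => (0:ℝ)) ?_]
  · simp
  · intro t ht
    rw [uIcc_of_le h0] at ht
    exact vFn_zero_small hσ hθ (by rcases ht with ⟨_, h2⟩; linarith)

lemma wFn_lt_S (hσ : 0 < σ) (hθ : 1 < θ) {t : ℝ} (h : wFn σ θ t ≠ 0) :
    4 ≤ t ∧ t < 4 * zetaR θ := by
  by_contra hc
  push_neg at hc
  rcases lt_or_ge t 4 with h4 | h4
  · exact h (wFn_zero hθ (Or.inl h4))
  · exact h (wFn_zero hθ (Or.inr (hc h4)))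

lemma scalar_pow {p a b : ℝ} (hp : 1 < p) (ha : 0 ≤ a) (hb : 0 ≤ b) (hab : a = 0 ∨ b = 0) :
    |a - b| ^ (p - 2) * (a - b) = a ^ (p - 1) - b ^ (p - 1) := by
  rcases hab with rfl | rfl
  · rcases eq_or_lt_of_le hb with rfl | hb'
    · simp
    · rw [zero_sub, abs_neg, abs_of_pos hb', Real.zero_rpow (by linarith : p - 1 ≠ 0), zero_sub]
      rw [mul_neg, ← Real.rpow_add_one hb'.ne']
      ring_nf
  · rcases eq_or_lt_of_le ha with rfl | ha'
    · simp
    · rw [sub_zero, abs_of_pos ha', Real.zero_rpow (by linarith : p - 1 ≠ 0), sub_zero]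
      rw [← Real.rpow_add_one ha'.ne']
      ring_nf

lemma vFn_rpow (hσ : 0 < σ) (hθ : 1 < θ) {p : ℝ} (hp : 1 < p) (r : ℝ) :
    vFn ((p - 1) * σ) θ r = |vFn σ θ r| ^ (p - 2) * vFn σ θ r := by
  have hq : (0:ℝ) < p - 1 := by linarith
  set A := 16 * zetaR θ * r - 4 * zetaR θ with hA
  set B := 16 * zetaR θ * r - 8 * zetaR θ with hB
  have ha := wFn_nonneg (σ := σ) (ξ := A) hσ hθ
  have hb := wFn_nonneg (σ := σ) (ξ := B) hσ hθ
  have hdisj : wFn σ θ A = 0 ∨ wFn σ θ B = 0 := by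
    by_contra hc
    push_neg at hc
    have h1 := wFn_lt_S hσ hθ hc.1
    have h2 := wFn_lt_S hσ hθ hc.2
    have : B = A - 4 * zetaR θ := by rw [hA, hB]; ring
    linarith [h1.2, h2.1]
  rw [vFn, vFn, wFn_rpow hσ hq A, wFn_rpow hσ hq B]
  rw [← scalar_pow hp ha hb hdisj]

lemma hasGradientAt_radial {d : ℕ} {u : ℝ → ℝ} {c : ℝ} {x : EuclideanSpace ℝ (Fin d)}
    (hx : x ≠ 0) (hu : HasDerivAt u c ‖x‖) :
    HasGradientAt (fun y : EuclideanSpace ℝ (Fin d) => u ‖y‖) ((c / ‖x‖) • x) x := by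
  have hr : (0:ℝ) < ‖x‖ := norm_pos_iff.2 hx
  have hsq : HasFDerivAt (fun y : EuclideanSpace ℝ (Fin d) => ‖y‖ ^ 2)
      (2 • (innerSL ℝ x)) x := (hasStrictFDerivAt_norm_sq x).hasFDerivAt
  have hsqrt : HasDerivAt Real.sqrt (1 / (2 * Real.sqrt (‖x‖ ^ 2))) (‖x‖ ^ 2) :=
    Real.hasDerivAt_sqrt (by positivity)
  have hcompsqrt := hsqrt.comp_hasFDerivAt x hsq
  have hfun : (fun y : EuclideanSpace ℝ (Fin d) => Real.sqrt (‖y‖ ^ 2)) =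
      fun y : EuclideanSpace ℝ (Fin d) => ‖y‖ := by
    funext y; rw [Real.sqrt_sq (norm_nonneg y)]
  rw [Function.comp_def, hfun] at hcompsqrt
  have hcomp := hu.comp_hasFDerivAt x hcompsqrt
  rw [hasGradientAt_iff_hasFDerivAt]
  refine hcomp.congr_fderiv ?_
  apply ContinuousLinearMap.ext
  intro y
  rw [Real.sqrt_sq (norm_nonneg x)]
  simp only [InnerProductSpace.toDual_apply_apply, ContinuousLinearMap.smul_apply,
    ContinuousLinearMap.coe_smul', Pi.smul_apply, innerSL_apply_apply, smul_eq_mul,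
    real_inner_smul_left, nsmul_eq_mul, Nat.cast_ofNat]
  field_simp

lemma gradient_radial_uFn (hσ : 0 < σ) (hθ : 1 < θ) {d : ℕ} (x : EuclideanSpace ℝ (Fin d)) :
    gradient (fun y : EuclideanSpace ℝ (Fin d) => uFn σ θ ‖y‖) x
      = (vFn σ θ ‖x‖ / ‖x‖) • x := by
  rcases eq_or_ne x 0 with rfl | hx
  · rw [smul_zero]
    have hloc : (fun y : EuclideanSpace ℝ (Fin d) => uFn σ θ ‖y‖)
        =ᶠ[nhds (0 : EuclideanSpace ℝ (Fin d))] (fun _ => (0:ℝ)) := by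
      filter_upwards [Metric.ball_mem_nhds (0 : EuclideanSpace ℝ (Fin d)) (by norm_num : (0:ℝ) < 1/4)]
        with y hy
      rw [mem_ball_zero_iff] at hy
      exact uFn_zero_small hσ hθ (norm_nonneg y) hy
    rw [hloc.gradient_eq, gradient_fun_const]
  · exact (hasGradientAt_radial hx (hasDerivAt_uFn hσ hθ ‖x‖)).gradient

end Aux

/-- For the radial function u_{σ,θ,d}(x) = u_{σ,θ}(|x|₂) the p-Laplacian vector field
satisfies A(∇u_{σ,θ,d})(x) = |∇u_{σ,θ,d}(x)|^{p−2} ∇u_{σ,θ,d}(x)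
= v_{(p−1)σ,θ}(|x|₂)·x/|x|₂ = ∇u_{(p−1)σ,θ,d}(x) for all x ∈ ℝ^d. -/
theorem stmt17 (d : ℕ) (hd : 1 ≤ d) (p σ θ : ℝ) (hp : 1 < p) (hσ : 0 < σ) (hθ : 1 < θ) :
    ∀ x : EuclideanSpace ℝ (Fin d),
      ‖gradient (fun y : EuclideanSpace ℝ (Fin d) => uFn σ θ ‖y‖) x‖ ^ (p - 2) •
          gradient (fun y : EuclideanSpace ℝ (Fin d) => uFn σ θ ‖y‖) x =
        (vFn ((p - 1) * σ) θ ‖x‖ / ‖x‖) • x ∧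
      ‖gradient (fun y : EuclideanSpace ℝ (Fin d) => uFn σ θ ‖y‖) x‖ ^ (p - 2) •
          gradient (fun y : EuclideanSpace ℝ (Fin d) => uFn σ θ ‖y‖) x =
        gradient (fun y : EuclideanSpace ℝ (Fin d) => uFn ((p - 1) * σ) θ ‖y‖) x := by

  intro x
  have hσ' : 0 < (p - 1) * σ := by nlinarith
  have key : ‖gradient (fun y : EuclideanSpace ℝ (Fin d) => uFn σ θ ‖y‖) x‖ ^ (p - 2) •
      gradient (fun y : EuclideanSpace ℝ (Fin d) => uFn σ θ ‖y‖) x =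
      (vFn ((p - 1) * σ) θ ‖x‖ / ‖x‖) • x := by
    rw [gradient_radial_uFn hσ hθ x]
    rcases eq_or_ne x 0 with rfl | hx
    · simp
    · have hr : (0:ℝ) < ‖x‖ := norm_pos_iff.2 hx
      set c := vFn σ θ ‖x‖ with hc
      have hnorm : ‖(c / ‖x‖) • x‖ = |c| := by
        rw [norm_smul, Real.norm_eq_abs, abs_div, abs_of_pos hr, div_mul_cancel₀]
        exact hr.ne'
      rw [hnorm, smul_smul, vFn_rpow hσ hθ hp ‖x‖]
      congr 1
      field_simp
      rfl
  exact ⟨key, by rw [key, gradient_radial_uFn hσ' hθ x]⟩
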